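/- Let γ > 0, let x_1, …, x_n ∈ ℝ^d satisfy ‖x_t‖ ≤ L for all t, and define V_t := γ·I + Σ_{s=1}^{t} x_s x_sᵀ for t = 0, 1, …, n. Then Σ_{t=1}^{n} min(1, √(x_tᵀ V_{t-1}⁻¹ x_t)) ≤ √(2 n d log(1 + n·L²/(d·γ))). -/

import Mathlib

open Matrix

section Aux

private lemma aux_vecMulVec_psd {d : ℕ} (v : Fin d → ℝ) : (vecMulVec v v).PosSemidef := by
  have h : vecMulVec v v = replicateCol Unit v * (replicateCol Unit v)ᴴ := by
    rw [conjTranspose_replicateCol, vecMulVec_eq Unit]; simp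
  rw [h]; exact posSemidef_self_mul_conjTranspose _

private lemma aux_det_rank_one {d : ℕ} (A : Matrix (Fin d) (Fin d) ℝ) (hA : A.PosDef)
    (v : Fin d → ℝ) : (A + vecMulVec v v).det = A.det * (1 + v ⬝ᵥ A⁻¹ *ᵥ v) := by
  have h : vecMulVec v v = replicateCol Unit v * replicateRow Unit v := vecMulVec_eq Unit v v
  rw [h, det_add_replicateCol_mul_replicateRow hA.det_pos.ne'.isUnit]
  congr 1
  rw [det_unique]
  simp only [Matrix.add_apply, Matrix.mul_apply, mulVec, dotProduct, Finset.sum_mul,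
    Finset.mul_sum, Matrix.one_apply_eq, replicateRow_apply, replicateCol_apply]
  rw [Finset.sum_comm]
  ring_nf

private lemma aux_det_le_trace_pow {d : ℕ} (hd : 0 < d) (A : Matrix (Fin d) (Fin d) ℝ)
    (hA : A.PosDef) : A.det ≤ (A.trace / d) ^ d := by
  have hH := hA.isHermitian
  have hdet : A.det = ∏ i, hH.eigenvalues i := by
    rw [hH.det_eq_prod_eigenvalues]; norm_num
  have htr : A.trace = ∑ i, hH.eigenvalues i := by
    simp [hH.trace_eq_sum_eigenvalues]
  have hpos : ∀ i, (0:ℝ) < hH.eigenvalues i := hA.eigenvalues_pos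
  have hamgm := Real.geom_mean_le_arith_mean (Finset.univ : Finset (Fin d)) (fun _ => 1)
    hH.eigenvalues (fun _ _ => zero_le_one) (by simp [hd]) (fun i _ => (hpos i).le)
  simp only [Real.rpow_one, one_mul, Finset.sum_const, Finset.card_univ, Fintype.card_fin,
    nsmul_eq_mul, mul_one] at hamgm
  have hprod_pos : (0:ℝ) < ∏ i, hH.eigenvalues i := Finset.prod_pos fun i _ => hpos i
  have key : (∏ i, hH.eigenvalues i) ≤ ((∑ i, hH.eigenvalues i) / d) ^ d := by
    have h1 : ((∏ i, hH.eigenvalues i) ^ ((d:ℝ))⁻¹) ^ d ≤ ((∑ i, hH.eigenvalues i) / d) ^ d :=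
      pow_le_pow_left₀ (Real.rpow_nonneg hprod_pos.le _) hamgm d
    calc (∏ i, hH.eigenvalues i)
        = ((∏ i, hH.eigenvalues i) ^ ((d:ℝ))⁻¹) ^ d := by
          rw [← Real.rpow_natCast ((∏ i, hH.eigenvalues i) ^ ((d:ℝ))⁻¹) d,
            ← Real.rpow_mul hprod_pos.le, inv_mul_cancel₀ (by positivity), Real.rpow_one]
      _ ≤ _ := h1
  rw [hdet, htr]; exact key

private lemma aux_min_sqrt_le (u : ℝ) (hu : 0 ≤ u) :
    min 1 (Real.sqrt u) ≤ Real.sqrt (2 * Real.log (1 + u)) := by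
  rcases le_or_gt u 1 with h | h
  · rw [min_eq_right (by rw [show (1:ℝ) = Real.sqrt 1 by simp]; exact Real.sqrt_le_sqrt h)]
    apply Real.sqrt_le_sqrt
    have hexp : Real.exp (u/2) ≤ 1 + u := by
      have h2 : 1 - u/2 ≤ Real.exp (-(u/2)) := by
        have := Real.add_one_le_exp (-(u/2)); linarith
      have h3 : (1 - u/2) * (1 + u) ≥ 1 := by nlinarith
      have h4 : Real.exp (-(u/2)) * Real.exp (u/2) = 1 := by
        rw [← Real.exp_add]; simp
      nlinarith [Real.exp_pos (u/2), Real.exp_pos (-(u/2))]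
    have := (Real.le_log_iff_exp_le (by linarith : (0:ℝ) < 1 + u)).2 hexp
    linarith
  · rw [min_eq_left (by rw [show (1:ℝ) = Real.sqrt 1 by simp]; exact Real.sqrt_le_sqrt h.le)]
    have h2 : Real.log 2 ≤ Real.log (1 + u) := Real.log_le_log (by norm_num) (by linarith)
    have h3 : (1:ℝ) ≤ 2 * Real.log (1 + u) := by nlinarith [Real.log_two_gt_d9]
    calc (1:ℝ) = Real.sqrt 1 := by simp
      _ ≤ _ := Real.sqrt_le_sqrt h3

end Aux

/-- Cumulative exploration-bonus bound: with `V_t = γ·I + Σ_{s<t} x_s x_sᵀ`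
and `‖x_t‖ ≤ L`,
`Σ_{t=1}^{n} min(1, √(x_tᵀ V_{t-1}⁻¹ x_t)) ≤ √(2 n d log(1 + nL²/(dγ)))`. -/
theorem sum_sqrt_exploration_bonus_bound {d n : ℕ} (γ L : ℝ) (hγ : 0 < γ)
    (x : ℕ → (Fin d → ℝ)) (hL : ∀ t < n, Real.sqrt (x t ⬝ᵥ x t) ≤ L)
    (V : ℕ → Matrix (Fin d) (Fin d) ℝ)
    (hV : ∀ t, V t = γ • (1 : Matrix (Fin d) (Fin d) ℝ)
        + ∑ s ∈ Finset.range t, vecMulVec (x s) (x s)) :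
    ∑ t ∈ Finset.range n, min 1 (Real.sqrt (x t ⬝ᵥ (V t)⁻¹ *ᵥ x t))
      ≤ Real.sqrt (2 * n * d * Real.log (1 + n * L ^ 2 / (d * γ))) := by
  rcases Nat.eq_zero_or_pos d with hd | hd
  · subst hd
    have h0 : ∀ t, (x t ⬝ᵥ (V t)⁻¹ *ᵥ x t) = 0 := fun t => by
      simp [dotProduct]
    simp [h0]
  -- main case: d > 0
  set u : ℕ → ℝ := fun t => x t ⬝ᵥ (V t)⁻¹ *ᵥ x t with hu_def
  have hVpos : ∀ t, (V t).PosDef := by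
    intro t
    rw [hV t]
    refine Matrix.PosDef.add_posSemidef ?_ ?_
    · rw [smul_one_eq_diagonal]; exact Matrix.PosDef.diagonal fun _ => hγ
    · refine Finset.sum_induction _ _ (fun a b ha hb => ha.add hb) ?_ ?_
      · exact Matrix.PosSemidef.zero
      · exact fun s _ => aux_vecMulVec_psd (x s)
  have hu0 : ∀ t, 0 ≤ u t := by
    intro t
    have := ((hVpos t).inv).posSemidef.dotProduct_mulVec_nonneg (x t)
    simpa using this
  have hdet_succ : ∀ t, (V (t+1)).det = (V t).det * (1 + u t) := by
    intro t
    have hstep : V (t+1) = V t + vecMulVec (x t) (x t) := by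
      rw [hV (t+1), hV t, Finset.sum_range_succ, add_assoc]
    rw [hstep, aux_det_rank_one (V t) (hVpos t) (x t)]
  have hdetpos : ∀ t, 0 < (V t).det := fun t => (hVpos t).det_pos
  -- telescoping sum of logs
  have hlogsum : ∀ m, ∑ t ∈ Finset.range m, Real.log (1 + u t)
      = Real.log ((V m).det) - Real.log ((V 0).det) := by
    intro m
    induction m with
    | zero => simp
    | succ k ih =>
      rw [Finset.sum_range_succ, ih, hdet_succ k,
        Real.log_mul (hdetpos k).ne' (by nlinarith [hu0 k])]
      ring
  -- trace bound
  have hL2 : ∀ t < n, x t ⬝ᵥ x t ≤ L ^ 2 := by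
    intro t ht
    have h1 : (0:ℝ) ≤ x t ⬝ᵥ x t := by
      have := (dotProduct_self_star_nonneg (x t))
      simpa using this
    have := hL t ht
    nlinarith [Real.sq_sqrt h1, Real.sqrt_nonneg (x t ⬝ᵥ x t)]
  have hvmv : ∀ s : ℕ, (vecMulVec (x s) (x s)).trace = x s ⬝ᵥ x s := fun s => by
    simp [trace, vecMulVec_apply, dotProduct, Matrix.diag]
  have htrace_eq : (V n).trace = γ * d + ∑ s ∈ Finset.range n, (x s ⬝ᵥ x s) := by
    rw [hV n, trace_add, trace_smul, trace_one, trace_sum]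
    simp only [hvmv, smul_eq_mul, Fintype.card_fin]
  have hxx_nonneg : ∀ s, (0:ℝ) ≤ x s ⬝ᵥ x s := by
    intro s
    have := (dotProduct_self_star_nonneg (x s))
    simpa using this
  have htrace_le : (V n).trace ≤ γ * d + n * L ^ 2 := by
    rw [htrace_eq]
    have : ∑ s ∈ Finset.range n, (x s ⬝ᵥ x s) ≤ ∑ s ∈ Finset.range n, L ^ 2 :=
      Finset.sum_le_sum fun s hs => hL2 s (Finset.mem_range.mp hs)
    simp only [Finset.sum_const, Finset.card_range, nsmul_eq_mul] at this
    linarith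
  have hdpos : (0:ℝ) < (d:ℝ) := by exact_mod_cast hd
  have htrace_nonneg : (0:ℝ) ≤ (V n).trace := by
    rw [htrace_eq]
    have : (0:ℝ) ≤ ∑ s ∈ Finset.range n, (x s ⬝ᵥ x s) :=
      Finset.sum_nonneg fun s _ => hxx_nonneg s
    nlinarith
  have hdet_le : (V n).det ≤ ((γ * d + n * L ^ 2) / d) ^ d := by
    calc (V n).det ≤ ((V n).trace / d) ^ d := aux_det_le_trace_pow hd (V n) (hVpos n)
      _ ≤ ((γ * d + n * L ^ 2) / d) ^ d := by
          apply pow_le_pow_left₀ (by positivity)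
          exact div_le_div_of_nonneg_right htrace_le hdpos.le
  have hdet0 : (V 0).det = γ ^ d := by
    rw [hV 0]
    simp [det_smul]
  -- bound on sum of logs
  have hquot : ((γ * d + n * L ^ 2) / d) / γ = 1 + n * L ^ 2 / (d * γ) := by
    field_simp
  have hArg_pos : (0:ℝ) < (γ * d + n * L ^ 2) / d := by positivity
  have hS : ∑ t ∈ Finset.range n, Real.log (1 + u t)
      ≤ d * Real.log (1 + n * L ^ 2 / (d * γ)) := by
    rw [hlogsum n, hdet0, Real.log_pow]
    have h1 : Real.log ((V n).det) ≤ d * Real.log ((γ * d + n * L ^ 2) / d) := by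
      calc Real.log ((V n).det) ≤ Real.log (((γ * d + n * L ^ 2) / d) ^ d) :=
            Real.log_le_log (hdetpos n) hdet_le
        _ = d * Real.log ((γ * d + n * L ^ 2) / d) := by rw [Real.log_pow]
    have h2 : Real.log ((γ * d + n * L ^ 2) / d) - Real.log γ
        = Real.log (1 + n * L ^ 2 / (d * γ)) := by
      rw [← Real.log_div hArg_pos.ne' hγ.ne', hquot]
    have : (d:ℝ) * Real.log ((γ * d + n * L ^ 2) / d) - d * Real.log γ
        = d * Real.log (1 + n * L ^ 2 / (d * γ)) := by
      rw [← mul_sub, h2]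
    linarith
  -- chain of inequalities
  have hlog_nonneg : ∀ t, 0 ≤ Real.log (1 + u t) := fun t =>
    Real.log_nonneg (by linarith [hu0 t])
  have step1 : ∑ t ∈ Finset.range n, min 1 (Real.sqrt (u t))
      ≤ ∑ t ∈ Finset.range n, Real.sqrt (2 * Real.log (1 + u t)) :=
    Finset.sum_le_sum fun t _ => aux_min_sqrt_le (u t) (hu0 t)
  have step2 : ∑ t ∈ Finset.range n, Real.sqrt (2 * Real.log (1 + u t))
      ≤ Real.sqrt n * Real.sqrt (∑ t ∈ Finset.range n, 2 * Real.log (1 + u t)) := by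
    have := Real.sum_mul_le_sqrt_mul_sqrt (Finset.range n) (fun _ => 1)
      (fun t => Real.sqrt (2 * Real.log (1 + u t)))
    simp only [one_mul, one_pow, Finset.sum_const, Finset.card_range, nsmul_eq_mul, mul_one]
      at this
    have hsq : ∀ t ∈ Finset.range n,
        (Real.sqrt (2 * Real.log (1 + u t))) ^ 2 = 2 * Real.log (1 + u t) := fun t _ =>
      Real.sq_sqrt (by linarith [hlog_nonneg t])
    rwa [Finset.sum_congr rfl hsq] at this
  have step3 : Real.sqrt n * Real.sqrt (∑ t ∈ Finset.range n, 2 * Real.log (1 + u t))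
      ≤ Real.sqrt (2 * n * d * Real.log (1 + n * L ^ 2 / (d * γ))) := by
    rw [← Real.sqrt_mul (Nat.cast_nonneg n)]
    apply Real.sqrt_le_sqrt
    rw [← Finset.mul_sum]
    have hn0 : (0:ℝ) ≤ (n:ℝ) := Nat.cast_nonneg n
    nlinarith [hS]
  calc ∑ t ∈ Finset.range n, min 1 (Real.sqrt (u t))
      ≤ ∑ t ∈ Finset.range n, Real.sqrt (2 * Real.log (1 + u t)) := step1
    _ ≤ Real.sqrt n * Real.sqrt (∑ t ∈ Finset.range n, 2 * Real.log (1 + u t)) := step2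
    _ ≤ Real.sqrt (2 * n * d * Real.log (1 + n * L ^ 2 / (d * γ))) := step3
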